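/- Let N and K be positive natural numbers, let v ∈ ℂ^N and b₁, …, b_K ∈ ℂ^N be fixed vectors, let N₀ > 0 be a real number, and let g be a complex-valued random variable on a probability space with 𝔼[|g|²] = γ < ∞. Define the random channel vector h = g·v. Then for every index k ∈ {1, …, K}: 𝔼[log(1 + |b_k^H h|² / (Σ_{ℓ≠k} |b_ℓ^H h|² + N₀))] ≤ log(1 + γ|v^H b_k|² / (Σ_{ℓ≠k} γ|v^H b_ℓ|² + N₀)). -/

import Mathlib

open MeasureTheory
open scoped BigOperators

lemma tangent (A B c x y : ℝ) (hAB : B ≤ A) (hB : 0 ≤ B) (hc : 0 < c)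
    (hx : 0 ≤ x) (hy : 0 ≤ y) :
    Real.log ((A*x+c)/(B*x+c)) ≤ Real.log ((A*y+c)/(B*y+c))
      + c*(A-B)/((A*y+c)*(B*y+c)) * (x-y) := by
  have hA : 0 ≤ A := le_trans hB hAB
  have hq : 0 < B*x+c := by positivity
  have hp : 0 < A*x+c := by positivity
  have hr : 0 < A*y+c := by positivity
  have hs : 0 < B*y+c := by positivity
  have hlog : Real.log ((A*x+c)/(B*x+c)) - Real.log ((A*y+c)/(B*y+c))
      = Real.log (((A*x+c)*(B*y+c))/((B*x+c)*(A*y+c))) := by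
    rw [Real.log_div hp.ne' hq.ne', Real.log_div hr.ne' hs.ne',
        Real.log_div (by positivity) (by positivity),
        Real.log_mul hp.ne' hs.ne', Real.log_mul hq.ne' hr.ne']
    ring
  have h1 : Real.log (((A*x+c)*(B*y+c))/((B*x+c)*(A*y+c)))
      ≤ ((A*x+c)*(B*y+c))/((B*x+c)*(A*y+c)) - 1 :=
    Real.log_le_sub_one_of_pos (by positivity)
  have h2 : ((A*x+c)*(B*y+c))/((B*x+c)*(A*y+c)) - 1
      = c*(A-B)*(x-y)/((B*x+c)*(A*y+c)) := by
    field_simp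
    ring
  have h3 : c*(A-B)*(x-y)/((B*x+c)*(A*y+c)) ≤ c*(A-B)/((A*y+c)*(B*y+c)) * (x-y) := by
    have heq : c*(A-B)/((A*y+c)*(B*y+c)) * (x-y) = c*(A-B)*(x-y)/((B*y+c)*(A*y+c)) := by
      rw [div_mul_eq_mul_div, mul_comm (A*y+c) (B*y+c)]
    rw [heq, div_le_div_iff₀ (by positivity) (by positivity)]
    rcases le_total x y with h | h
    · nlinarith [mul_nonneg (mul_nonneg (mul_nonneg (mul_nonneg hc.le (sub_nonneg.2 hAB))
        (sub_nonneg.2 h)) (mul_nonneg hB (sub_nonneg.2 h))) hr.le]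
    · nlinarith [mul_nonneg (mul_nonneg (mul_nonneg (mul_nonneg hc.le (sub_nonneg.2 hAB))
        (sub_nonneg.2 h)) (mul_nonneg hB (sub_nonneg.2 h))) hr.le]
  linarith [hlog ▸ (h1.trans_eq h2)]

/-- Equation (22) of the paper: the ergodic per-user rate upper bound R_k ≤ R̄_k for the
rank-one channel h = g·v, proved via Jensen's inequality. -/
theorem stmt7 (N K : ℕ) (hN : 0 < N) (hK : 0 < K)
    {Ω : Type*} [MeasurableSpace Ω] (μ : Measure Ω) [IsProbabilityMeasure μ]
    (v : EuclideanSpace ℂ (Fin N)) (b : Fin K → EuclideanSpace ℂ (Fin N))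
    (N₀ : ℝ) (hN₀ : 0 < N₀)
    (g : Ω → ℂ) (γ : ℝ)
    (hg2 : Integrable (fun ω => ‖g ω‖ ^ 2) μ)
    (hγ : ∫ ω, ‖g ω‖ ^ 2 ∂μ = γ)
    (k : Fin K) :
    ∫ ω, Real.log (1 + ‖(inner ℂ (b k) (g ω • v) : ℂ)‖ ^ 2 /
        ((∑ ℓ ∈ Finset.univ.erase k, ‖(inner ℂ (b ℓ) (g ω • v) : ℂ)‖ ^ 2) + N₀)) ∂μ ≤
      Real.log (1 + γ * ‖(inner ℂ v (b k) : ℂ)‖ ^ 2 /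
        ((∑ ℓ ∈ Finset.univ.erase k, γ * ‖(inner ℂ v (b ℓ) : ℂ)‖ ^ 2) + N₀)) := by
  set a : Fin K → ℝ := fun ℓ => ‖(inner ℂ (b ℓ) v : ℂ)‖ ^ 2 with ha
  set S : ℝ := ∑ ℓ ∈ Finset.univ.erase k, a ℓ with hS
  have ha0 : ∀ ℓ, 0 ≤ a ℓ := fun ℓ => by positivity
  have hS0 : 0 ≤ S := Finset.sum_nonneg fun ℓ _ => ha0 ℓ
  have hγ0 : 0 ≤ γ := hγ ▸ integral_nonneg fun ω => by positivity
  set A : ℝ := a k + S with hA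
  have hBA : S ≤ A := by simp [hA, ha0 k]
  -- norm identities
  have hnorm : ∀ ℓ ω, ‖(inner ℂ (b ℓ) (g ω • v) : ℂ)‖ ^ 2 = ‖g ω‖ ^ 2 * a ℓ := by
    intro ℓ ω
    rw [inner_smul_right, norm_mul, mul_pow]
  have hvb : ∀ ℓ, ‖(inner ℂ v (b ℓ) : ℂ)‖ ^ 2 = a ℓ := by
    intro ℓ
    simp only [ha]
    rw [← norm_inner_symm]
  -- rewrite integrand
  have hform : ∀ x : ℝ, 0 ≤ x →
      1 + x * a k / (x * S + N₀) = (A * x + N₀) / (S * x + N₀) := by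
    intro x hx
    have h1 : (0:ℝ) < x * S + N₀ := by positivity
    field_simp
    ring
  have hptwise : ∀ ω,
      Real.log (1 + ‖(inner ℂ (b k) (g ω • v) : ℂ)‖ ^ 2 /
        ((∑ ℓ ∈ Finset.univ.erase k, ‖(inner ℂ (b ℓ) (g ω • v) : ℂ)‖ ^ 2) + N₀))
      = Real.log ((A * ‖g ω‖ ^ 2 + N₀) / (S * ‖g ω‖ ^ 2 + N₀)) := by
    intro ω
    have hsum : (∑ ℓ ∈ Finset.univ.erase k, ‖(inner ℂ (b ℓ) (g ω • v) : ℂ)‖ ^ 2)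
        = ‖g ω‖ ^ 2 * S := by
      rw [hS, Finset.mul_sum]
      exact Finset.sum_congr rfl fun ℓ _ => hnorm ℓ ω
    rw [hsum, hnorm k ω, hform _ (by positivity)]
  have hRHS : Real.log (1 + γ * ‖(inner ℂ v (b k) : ℂ)‖ ^ 2 /
        ((∑ ℓ ∈ Finset.univ.erase k, γ * ‖(inner ℂ v (b ℓ) : ℂ)‖ ^ 2) + N₀))
      = Real.log ((A * γ + N₀) / (S * γ + N₀)) := by
    have hsum : (∑ ℓ ∈ Finset.univ.erase k, γ * ‖(inner ℂ v (b ℓ) : ℂ)‖ ^ 2) = γ * S := by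
      rw [hS, Finset.mul_sum]
      exact Finset.sum_congr rfl fun ℓ _ => by rw [hvb]
    rw [hsum, hvb, hform γ hγ0]
  rw [hRHS]
  set C : ℝ := Real.log ((A * γ + N₀) / (S * γ + N₀)) with hC
  set D : ℝ := N₀ * (A - S) / ((A * γ + N₀) * (S * γ + N₀)) with hD
  have hbound : ∀ ω,
      Real.log (1 + ‖(inner ℂ (b k) (g ω • v) : ℂ)‖ ^ 2 /
        ((∑ ℓ ∈ Finset.univ.erase k, ‖(inner ℂ (b ℓ) (g ω • v) : ℂ)‖ ^ 2) + N₀))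
      ≤ C + D * (‖g ω‖ ^ 2 - γ) := by
    intro ω
    rw [hptwise ω]
    exact tangent A S N₀ (‖g ω‖^2) γ hBA hS0 hN₀ (by positivity) hγ0
  have hint : Integrable (fun ω => C + D * (‖g ω‖ ^ 2 - γ)) μ :=
    (integrable_const C).add (((hg2.sub (integrable_const γ)).const_mul D))
  have hmono := integral_mono_of_nonneg
    (f := fun ω => Real.log (1 + ‖(inner ℂ (b k) (g ω • v) : ℂ)‖ ^ 2 /
        ((∑ ℓ ∈ Finset.univ.erase k, ‖(inner ℂ (b ℓ) (g ω • v) : ℂ)‖ ^ 2) + N₀)))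
    (g := fun ω => C + D * (‖g ω‖ ^ 2 - γ)) (μ := μ)
    (Filter.Eventually.of_forall fun ω => Real.log_nonneg (by
      have : 0 ≤ ‖(inner ℂ (b k) (g ω • v) : ℂ)‖ ^ 2 /
        ((∑ ℓ ∈ Finset.univ.erase k, ‖(inner ℂ (b ℓ) (g ω • v) : ℂ)‖ ^ 2) + N₀) := by
        apply div_nonneg (by positivity)
        have : (0:ℝ) ≤ ∑ ℓ ∈ Finset.univ.erase k, ‖(inner ℂ (b ℓ) (g ω • v) : ℂ)‖ ^ 2 :=
          Finset.sum_nonneg fun ℓ _ => by positivity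
        linarith
      linarith))
    hint
    (Filter.Eventually.of_forall hbound)
  refine hmono.trans ?_
  have heq : (fun ω => C + D * (‖g ω‖ ^ 2 - γ)) = fun ω => (C - D * γ) + D * ‖g ω‖ ^ 2 := by
    funext ω; ring
  have : ∫ ω, (C + D * (‖g ω‖ ^ 2 - γ)) ∂μ = C := by
    rw [heq, integral_add (integrable_const _) (hg2.const_mul D), integral_const,
        integral_const_mul, hγ]
    simp [measure_univ]
  rw [this]
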